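/- For every real inner product space and every family of vectors (V_w), the following Pythagorean decomposition with expectations removed holds at every grade n: ‖(id−E)∘id‖² = ‖(id−E)∘½(id−S)‖² + ‖(id−E)∘½(id+S)‖², where the inner product is taken over the words of length n. (This establishes that the sinhlog integrator is efficient: its leading-order mean-square error ‖(id−E)∘½(id−S)‖² never exceeds that of the stochastic Taylor integrator ‖(id−E)∘id‖².) -/

import Mathlib

open Finsupp

/-- Words over the alphabet `A = {0,1,…,d}`. -/
abbrev Word (d : ℕ) : Type := List (Fin (d+1))

/-- The free real vector space with basis the set of all words. -/
abbrev KA (d : ℕ) : Type := Word d →₀ ℝ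

/-- Shuffle product of two words, as an element of `KA d`. -/
noncomputable def shuffleWord (d : ℕ) : Word d → Word d → KA d
  | [], v => Finsupp.single v 1
  | a :: u, [] => Finsupp.single (a :: u) 1
  | a :: u, b :: v =>
      Finsupp.mapDomain (List.cons a) (shuffleWord d u (b :: v)) +
      Finsupp.mapDomain (List.cons b) (shuffleWord d (a :: u) v)
  termination_by u v => u.length + v.length

/-- Bilinear extension of the shuffle product to `KA d`. -/
noncomputable def sh (d : ℕ) (x y : KA d) : KA d :=
  x.sum fun u cu => y.sum fun v cv => (cu * cv) • shuffleWord d u v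

/-- Admissible words: concatenations of blocks each of which is the single
letter `0` or a pair `aa` with `a ≠ 0`. -/
inductive Admissible (d : ℕ) : Word d → Prop
  | nil : Admissible d []
  | zero {w : Word d} : Admissible d w → Admissible d (0 :: w)
  | pair {w : Word d} (a : Fin (d+1)) : a ≠ 0 → Admissible d w →
      Admissible d (a :: a :: w)

/-- Number of `0` letters. -/
def zc (d : ℕ) (w : Word d) : ℕ := w.count 0

/-- Half the number of nonzero letters. -/
def dc (d : ℕ) (w : Word d) : ℕ := (w.length - w.count 0) / 2

def nc (d : ℕ) (w : Word d) : ℕ := zc d w + dc d w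

open Classical in
/-- The expectation map on words. -/
noncomputable def Ebar (d : ℕ) (t : ℝ) (w : Word d) : ℝ :=
  if Admissible d w then t ^ nc d w / (2 ^ dc d w * Nat.factorial (nc d w)) else 0

/-- Linear extension of the expectation map to `KA d`. -/
noncomputable def EbarL (d : ℕ) (t : ℝ) (x : KA d) : ℝ :=
  x.sum fun w c => c * Ebar d t w

/-- The linear endomorphism of `KA d` determined by values on basis words. -/
noncomputable def wordLift (d : ℕ) (f : Word d → KA d) : KA d →ₗ[ℝ] KA d :=
  Finsupp.lsum ℝ fun w => LinearMap.toSpanSingleton ℝ (KA d) (f w)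

/-- The identity endomorphism `id`. -/
noncomputable def idE (d : ℕ) : KA d →ₗ[ℝ] KA d := LinearMap.id

/-- The reversal endomorphism `|S|`. -/
noncomputable def revE (d : ℕ) : KA d →ₗ[ℝ] KA d :=
  wordLift d fun w => Finsupp.single w.reverse 1

/-- The antipode `S`. -/
noncomputable def Sa (d : ℕ) : KA d →ₗ[ℝ] KA d :=
  wordLift d fun w => Finsupp.single w.reverse ((-1 : ℝ) ^ w.length)

/-- The convolution unit `ν`. -/
noncomputable def nuE (d : ℕ) : KA d →ₗ[ℝ] KA d :=
  wordLift d fun w => if w = [] then Finsupp.single ([] : Word d) 1 else 0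

/-- The expectation endomorphism `E`. -/
noncomputable def EE (d : ℕ) (t : ℝ) : KA d →ₗ[ℝ] KA d :=
  wordLift d fun w => Finsupp.single ([] : Word d) (Ebar d t w)

/-- The convolution product `X ⋆ Y`. -/
noncomputable def conv (d : ℕ) (X Y : KA d →ₗ[ℝ] KA d) : KA d →ₗ[ℝ] KA d :=
  wordLift d fun w => ∑ k ∈ Finset.range (w.length + 1),
    sh d (X (Finsupp.single (w.take k) 1)) (Y (Finsupp.single (w.drop k) 1))

/-- Convolution powers, `X^{⋆0} = ν`. -/
noncomputable def convPow (d : ℕ) (X : KA d →ₗ[ℝ] KA d) : ℕ → (KA d →ₗ[ℝ] KA d)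
  | 0 => nuE d
  | k + 1 => conv d X (convPow d X k)

/-- The inner product `⟨X,Y⟩` of endomorphisms, taken over the words of
length `n`, relative to the family of vectors `Vf`. -/
noncomputable def ip (d : ℕ) (t : ℝ) {H : Type*} [NormedAddCommGroup H]
    [InnerProductSpace ℝ H] (Vf : Word d → H) (n : ℕ)
    (X Y : KA d →ₗ[ℝ] KA d) : ℝ :=
  ∑ u : Fin n → Fin (d+1), ∑ v : Fin n → Fin (d+1),
    EbarL d t (sh d (X (Finsupp.single (List.ofFn u) 1))
                    (Y (Finsupp.single (List.ofFn v) 1))) *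
      (inner ℝ (Vf (List.ofFn u)) (Vf (List.ofFn v)) : ℝ)

/-- Positive semidefiniteness of the expectation Gram matrix at grade `n`:
indexed by the words of length `n` together with the empty word. -/
def gramPSD (d n : ℕ) (t : ℝ) : Prop :=
  ∀ c : Option (Fin n → Fin (d+1)) → ℝ,
    0 ≤ ∑ x : Option (Fin n → Fin (d+1)), ∑ y : Option (Fin n → Fin (d+1)),
      c x * c y *
        EbarL d t (shuffleWord d (x.elim ([] : Word d) List.ofFn)
                                 (y.elim ([] : Word d) List.ofFn))


section Aux

variable {d : ℕ}

lemma wordLift_single (f : Word d → KA d) (w : Word d) (c : ℝ) :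
    wordLift d f (Finsupp.single w c) = c • f w := by
  simp [wordLift]

lemma shuffleWord_nil_left (v : Word d) : shuffleWord d [] v = Finsupp.single v 1 := by
  rw [shuffleWord]

lemma shuffleWord_nil_right (u : Word d) : shuffleWord d u [] = Finsupp.single u 1 := by
  cases u <;> rw [shuffleWord]

lemma shuffleWord_cons (a b : Fin (d+1)) (u v : Word d) :
    shuffleWord d (a :: u) (b :: v) =
      Finsupp.mapDomain (List.cons a) (shuffleWord d u (b :: v)) +
      Finsupp.mapDomain (List.cons b) (shuffleWord d (a :: u) v) := by
  rw [shuffleWord]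

lemma sh_single (u v : Word d) :
    sh d (Finsupp.single u (1:ℝ)) (Finsupp.single v 1) = shuffleWord d u v := by
  unfold sh
  rw [Finsupp.sum_single_index (by simp), Finsupp.sum_single_index (by simp)]
  simp

lemma sh_add_left (x x' y : KA d) : sh d (x + x') y = sh d x y + sh d x' y := by
  unfold sh
  refine Finsupp.sum_add_index' (fun u => by simp) (fun u c c' => ?_)
  simp only [add_mul, add_smul, Finsupp.sum]
  exact Finset.sum_add_distrib

lemma sh_smul_left (c : ℝ) (x y : KA d) : sh d (c • x) y = c • sh d x y := by
  unfold sh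
  rw [Finsupp.sum_smul_index (fun u => by simp), Finsupp.smul_sum]
  refine Finsupp.sum_congr fun u _ => ?_
  rw [Finsupp.smul_sum]
  refine Finsupp.sum_congr fun v _ => ?_
  rw [mul_assoc, mul_smul]

lemma sh_add_right (x y y' : KA d) : sh d x (y + y') = sh d x y + sh d x y' := by
  unfold sh
  rw [Finsupp.sum_congr (g2 := fun u cu =>
      (y.sum fun v cv => (cu * cv) • shuffleWord d u v)
        + (y'.sum fun v cv => (cu * cv) • shuffleWord d u v))
    (fun u _ => Finsupp.sum_add_index' (fun v => by simp)
      (fun v c c' => by rw [mul_add, add_smul]))]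
  simp only [Finsupp.sum]
  exact Finset.sum_add_distrib

lemma sh_smul_right (c : ℝ) (x y : KA d) : sh d x (c • y) = c • sh d x y := by
  unfold sh
  rw [Finsupp.smul_sum]
  refine Finsupp.sum_congr fun u _ => ?_
  rw [Finsupp.sum_smul_index (fun v => by simp), Finsupp.smul_sum]
  refine Finsupp.sum_congr fun v _ => ?_
  rw [mul_left_comm, mul_smul]

lemma sh_sub_left (x x' y : KA d) : sh d (x - x') y = sh d x y - sh d x' y := by
  rw [sub_eq_add_neg, ← neg_one_smul ℝ x', sh_add_left, sh_smul_left, neg_one_smul,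
    ← sub_eq_add_neg]

lemma sh_sub_right (x y y' : KA d) : sh d x (y - y') = sh d x y - sh d x y' := by
  rw [sub_eq_add_neg, ← neg_one_smul ℝ y', sh_add_right, sh_smul_right, neg_one_smul,
    ← sub_eq_add_neg]

lemma EbarL_single (t : ℝ) (w : Word d) (c : ℝ) :
    EbarL d t (Finsupp.single w c) = c * Ebar d t w := by
  unfold EbarL
  rw [Finsupp.sum_single_index (by simp)]

lemma EbarL_add (t : ℝ) (x y : KA d) : EbarL d t (x + y) = EbarL d t x + EbarL d t y := by
  unfold EbarL
  exact Finsupp.sum_add_index' (fun w => by simp) (fun w c c' => add_mul c c' _)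

lemma EbarL_smul (t : ℝ) (c : ℝ) (x : KA d) : EbarL d t (c • x) = c * EbarL d t x := by
  unfold EbarL
  rw [Finsupp.sum_smul_index (fun w => by simp), Finsupp.sum, Finsupp.sum, Finset.mul_sum]
  exact Finset.sum_congr rfl fun w _ => mul_assoc c _ _

lemma EbarL_sub (t : ℝ) (x y : KA d) : EbarL d t (x - y) = EbarL d t x - EbarL d t y := by
  rw [sub_eq_add_neg, ← neg_one_smul ℝ y, EbarL_add, EbarL_smul, neg_one_mul,
    ← sub_eq_add_neg]

lemma Admissible.append {w₁ w₂ : Word d} (h1 : Admissible d w₁) (h2 : Admissible d w₂) :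
    Admissible d (w₁ ++ w₂) := by
  induction h1 with
  | nil => simpa
  | zero _ ih => exact Admissible.zero ih
  | pair a ha _ ih => exact Admissible.pair a ha ih

lemma Admissible.reverse {w : Word d} (h : Admissible d w) : Admissible d w.reverse := by
  induction h with
  | nil => simpa using Admissible.nil
  | zero _ ih => simpa using ih.append (Admissible.zero Admissible.nil)
  | pair a ha _ ih =>
      have h2 : Admissible d [a, a] := Admissible.pair a ha Admissible.nil
      simpa using ih.append h2

lemma Ebar_reverse (t : ℝ) (w : Word d) : Ebar d t w.reverse = Ebar d t w := by
  unfold Ebar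
  simp only [nc, zc, dc, List.count_reverse, List.length_reverse]
  by_cases h : Admissible d w
  · rw [if_pos h.reverse, if_pos h]
  · rw [if_neg (fun hc => h (by simpa using hc.reverse)), if_neg h]

lemma Ebar_nil (t : ℝ) : Ebar d t ([] : Word d) = 1 := by
  simp [Ebar, nc, zc, dc, Admissible.nil]

lemma mapDomain_comm_cons_snoc (c x : Fin (d+1)) (z : KA d) :
    Finsupp.mapDomain (· ++ [x]) (Finsupp.mapDomain (List.cons c) z)
      = Finsupp.mapDomain (List.cons c) (Finsupp.mapDomain (· ++ [x]) z) := by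
  rw [← Finsupp.mapDomain_comp, ← Finsupp.mapDomain_comp]
  congr 1

lemma mapDomain_snoc_reverse (c : Fin (d+1)) (z : KA d) :
    Finsupp.mapDomain (· ++ [c]) (Finsupp.mapDomain List.reverse z)
      = Finsupp.mapDomain List.reverse (Finsupp.mapDomain (List.cons c) z) := by
  rw [← Finsupp.mapDomain_comp, ← Finsupp.mapDomain_comp]
  congr 1
  funext l
  simp

lemma shuffleWord_snoc (a b : Fin (d+1)) :
    ∀ (N : ℕ) (u v : Word d), u.length + v.length ≤ N →
    shuffleWord d (u ++ [a]) (v ++ [b]) =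
      Finsupp.mapDomain (· ++ [a]) (shuffleWord d u (v ++ [b])) +
      Finsupp.mapDomain (· ++ [b]) (shuffleWord d (u ++ [a]) v) := by
  intro N
  induction N with
  | zero =>
      intro u v h
      obtain ⟨hu, hv⟩ : u = [] ∧ v = [] := by
        cases u <;> cases v <;> simp_all
      subst hu; subst hv
      simp only [List.nil_append]
      rw [shuffleWord_cons]
      simp only [shuffleWord_nil_left, shuffleWord_nil_right, Finsupp.mapDomain_single,
        List.cons_append, List.nil_append]
      abel
  | succ N ih =>
      intro u v h
      match u, v with
      | [], [] =>
          simp only [List.nil_append]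
          rw [shuffleWord_cons]
          simp only [shuffleWord_nil_left, shuffleWord_nil_right, Finsupp.mapDomain_single,
            List.cons_append, List.nil_append]
          abel
      | [], e :: v' =>
          have hih := ih [] v' (by simp at h ⊢; omega)
          simp only [List.nil_append] at hih ⊢
          simp only [List.cons_append]
          simp only [shuffleWord_cons, shuffleWord_nil_left]
          rw [hih]
          simp only [shuffleWord_nil_left, Finsupp.mapDomain_add, Finsupp.mapDomain_single,
            mapDomain_comm_cons_snoc, List.cons_append, List.nil_append]
          abel
      | c :: u', [] =>
          have hih := ih u' [] (by simp at h ⊢; omega)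
          simp only [List.nil_append] at hih ⊢
          simp only [List.cons_append]
          simp only [shuffleWord_cons, shuffleWord_nil_right]
          rw [hih]
          simp only [shuffleWord_nil_right, Finsupp.mapDomain_add, Finsupp.mapDomain_single,
            mapDomain_comm_cons_snoc, List.cons_append, List.nil_append]
          abel
      | c :: u', e :: v' =>
          have h1 := ih u' (e :: v') (by simp at h ⊢; omega)
          have h2 := ih (c :: u') v' (by simp at h ⊢; omega)
          simp only [List.cons_append] at h1 h2 ⊢
          rw [shuffleWord_cons, h1, h2]
          simp only [shuffleWord_cons, Finsupp.mapDomain_add, mapDomain_comm_cons_snoc]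
          abel

lemma shuffleWord_reverse :
    ∀ (N : ℕ) (u v : Word d), u.length + v.length ≤ N →
    shuffleWord d u.reverse v.reverse = Finsupp.mapDomain List.reverse (shuffleWord d u v) := by
  intro N
  induction N with
  | zero =>
      intro u v h
      obtain ⟨hu, hv⟩ : u = [] ∧ v = [] := by
        cases u <;> cases v <;> simp_all
      subst hu; subst hv
      simp [shuffleWord_nil_left, Finsupp.mapDomain_single]
  | succ N ih =>
      intro u v h
      match u, v with
      | [], v =>
          simp [shuffleWord_nil_left, Finsupp.mapDomain_single]
      | c :: u', [] =>
          simp [shuffleWord_nil_right, Finsupp.mapDomain_single]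
      | c :: u', e :: v' =>
          have h1 := ih u' (e :: v') (by simp at h ⊢; omega)
          have h2 := ih (c :: u') v' (by simp at h ⊢; omega)
          rw [List.reverse_cons, List.reverse_cons,
            shuffleWord_snoc c e (u'.reverse.length + v'.reverse.length) _ _ le_rfl,
            ← List.reverse_cons, ← List.reverse_cons, h1, h2,
            mapDomain_snoc_reverse, mapDomain_snoc_reverse,
            ← Finsupp.mapDomain_add, ← shuffleWord_cons]

lemma EbarL_mapDomain_reverse (t : ℝ) (x : KA d) :
    EbarL d t (Finsupp.mapDomain List.reverse x) = EbarL d t x := by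
  unfold EbarL
  rw [Finsupp.sum_mapDomain_index (fun w => by simp) (fun w c c' => add_mul c c' _)]
  exact Finsupp.sum_congr fun w _ => by rw [Ebar_reverse]

lemma EbarL_sh_rev (t : ℝ) (x y : Word d) :
    EbarL d t (shuffleWord d x.reverse y.reverse) = EbarL d t (shuffleWord d x y) := by
  rw [shuffleWord_reverse (x.length + y.length) x y le_rfl, EbarL_mapDomain_reverse]

lemma EE_single (t : ℝ) (w : Word d) :
    EE d t (Finsupp.single w (1:ℝ)) = Ebar d t w • Finsupp.single ([] : Word d) 1 := by
  rw [EE, wordLift_single, one_smul, Finsupp.smul_single, smul_eq_mul, mul_one]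

lemma Sa_single (w : Word d) :
    Sa d (Finsupp.single w (1:ℝ))
      = ((-1 : ℝ) ^ w.length) • Finsupp.single w.reverse 1 := by
  rw [Sa, wordLift_single, one_smul, Finsupp.smul_single, smul_eq_mul, mul_one]

lemma main_pt (t : ℝ) (x y : Word d) (hlen : x.length = y.length) :
    EbarL d t (sh d (((idE d - EE d t) ∘ₗ idE d) (Finsupp.single x 1))
                    (((idE d - EE d t) ∘ₗ idE d) (Finsupp.single y 1)))
      = EbarL d t (sh d (((idE d - EE d t) ∘ₗ ((1 / 2 : ℝ) • (idE d - Sa d)))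
                          (Finsupp.single x 1))
                        (((idE d - EE d t) ∘ₗ ((1 / 2 : ℝ) • (idE d - Sa d)))
                          (Finsupp.single y 1)))
        + EbarL d t (sh d (((idE d - EE d t) ∘ₗ ((1 / 2 : ℝ) • (idE d + Sa d)))
                             (Finsupp.single x 1))
                          (((idE d - EE d t) ∘ₗ ((1 / 2 : ℝ) • (idE d + Sa d)))
                             (Finsupp.single y 1))) := by
  have he : ((-1 : ℝ) ^ y.length) * ((-1 : ℝ) ^ y.length) = 1 := by
    rw [← pow_add]
    exact Even.neg_one_pow ⟨y.length, rfl⟩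
  simp only [LinearMap.comp_apply, LinearMap.sub_apply, LinearMap.add_apply,
    LinearMap.smul_apply, idE, LinearMap.id_coe, id_eq, Sa_single, EE_single,
    map_sub, map_add, map_smul, smul_sub, smul_add, smul_smul,
    sh_sub_left, sh_sub_right, sh_add_left, sh_add_right, sh_smul_left, sh_smul_right,
    sh_single, shuffleWord_nil_left, shuffleWord_nil_right,
    EbarL_sub, EbarL_add, EbarL_smul, EbarL_single, Ebar_nil, Ebar_reverse,
    EbarL_sh_rev, List.length_reverse, mul_one, one_mul, hlen]
  linear_combination (-(1/2 : ℝ) * (EbarL d t (shuffleWord d x y)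
    - Ebar d t x * Ebar d t y)) * he

end Aux

theorem stmt_7 (d n : ℕ) (hd : 1 ≤ d) (hn : 1 ≤ n) (t : ℝ) (ht : 0 < t)
    {H : Type*} [NormedAddCommGroup H] [InnerProductSpace ℝ H]
    (Vf : Word d → H) :
    ip d t Vf n ((idE d - EE d t) ∘ₗ idE d) ((idE d - EE d t) ∘ₗ idE d)
      = ip d t Vf n ((idE d - EE d t) ∘ₗ ((1 / 2 : ℝ) • (idE d - Sa d)))
                    ((idE d - EE d t) ∘ₗ ((1 / 2 : ℝ) • (idE d - Sa d)))
        + ip d t Vf n ((idE d - EE d t) ∘ₗ ((1 / 2 : ℝ) • (idE d + Sa d)))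
                      ((idE d - EE d t) ∘ₗ ((1 / 2 : ℝ) • (idE d + Sa d))) := by
  unfold ip
  rw [← Finset.sum_add_distrib]
  refine Finset.sum_congr rfl fun u _ => ?_
  rw [← Finset.sum_add_distrib]
  refine Finset.sum_congr rfl fun v _ => ?_
  rw [main_pt t (List.ofFn u) (List.ofFn v) (by simp), add_mul]
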